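/- Hadamard product of operators: if Σ A_n x^n is annihilated by θ^2 − xP(θ) − cx^2(θ+1)^2 and Σ B_n x^n is annihilated by θ^2 − xQ(θ), where P, Q are polynomials of degree ≤ 2 and c is a constant, then Σ A_n B_n x^n is annihilated by θ^4 − xP(θ)Q(θ) − cx^2 Q(θ)Q(θ+1). -/

import Mathlib

open PowerSeries

/-- The operator of multiplication by `x` on formal power series, as a `ℚ`-linear
endomorphism. -/
noncomputable def Mx : Module.End ℚ (PowerSeries ℚ) :=
  LinearMap.mulLeft ℚ (PowerSeries.X : PowerSeries ℚ)

/-- The Euler operator `θ = x·d/dx` on formal power series, as a `ℚ`-linear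
endomorphism. -/
noncomputable def Th : Module.End ℚ (PowerSeries ℚ) :=
  Mx ∘ₗ (PowerSeries.derivative ℚ).toLinearMap

/-- The Hadamard product `Σ A_n x^n * Σ B_n x^n = Σ A_n B_n x^n`. -/
noncomputable def hadamard (f g : PowerSeries ℚ) : PowerSeries ℚ :=
  PowerSeries.mk fun n => (PowerSeries.coeff n f) * (PowerSeries.coeff n g)

lemma coeff_Mx_zero (f : PowerSeries ℚ) : coeff 0 (Mx f) = 0 := by
  simp [Mx, LinearMap.mulLeft_apply]

lemma coeff_Mx_succ (n : ℕ) (f : PowerSeries ℚ) :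
    coeff (n + 1) (Mx f) = coeff n f := by
  simp [Mx, LinearMap.mulLeft_apply, coeff_succ_X_mul]

lemma coeff_Mx_sq_zero (f : PowerSeries ℚ) : coeff 0 ((Mx ^ 2) f) = 0 := by
  rw [pow_two, Module.End.mul_apply, coeff_Mx_zero]

lemma coeff_Mx_sq_one (f : PowerSeries ℚ) : coeff 1 ((Mx ^ 2) f) = 0 := by
  rw [pow_two, Module.End.mul_apply, show (1 : ℕ) = 0 + 1 from rfl,
    coeff_Mx_succ, coeff_Mx_zero]

lemma coeff_Mx_sq (n : ℕ) (f : PowerSeries ℚ) :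
    coeff (n + 2) ((Mx ^ 2) f) = coeff n f := by
  rw [pow_two, Module.End.mul_apply, show n + 2 = (n + 1) + 1 from rfl,
    coeff_Mx_succ, coeff_Mx_succ]

lemma coeff_Th (n : ℕ) (f : PowerSeries ℚ) :
    coeff n (Th f) = (n : ℚ) * coeff n f := by
  cases n with
  | zero => simp [Th, Mx, LinearMap.mulLeft_apply]
  | succ n =>
    simp only [Th, LinearMap.coe_comp, Function.comp_apply, Mx,
      LinearMap.mulLeft_apply, coeff_succ_X_mul, Derivation.coeFn_coe,
      PowerSeries.coeff_derivative]
    push_cast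
    ring

lemma coeff_Th_add_one (n : ℕ) (f : PowerSeries ℚ) :
    coeff n ((Th + 1) f) = ((n : ℚ) + 1) * coeff n f := by
  simp [LinearMap.add_apply, coeff_Th, add_mul]

lemma coeff_diag_pow (D : Module.End ℚ (PowerSeries ℚ)) (g : ℕ → ℚ)
    (h : ∀ n f, coeff n (D f) = g n * coeff n f) (k : ℕ) (n : ℕ)
    (f : PowerSeries ℚ) : coeff n ((D ^ k) f) = g n ^ k * coeff n f := by
  induction k with
  | zero => simp
  | succ k ih =>
    rw [pow_succ', Module.End.mul_apply, h, ih, pow_succ']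
    ring

lemma coeff_diag_aeval (D : Module.End ℚ (PowerSeries ℚ)) (g : ℕ → ℚ)
    (h : ∀ n f, coeff n (D f) = g n * coeff n f) (p : Polynomial ℚ) (n : ℕ)
    (f : PowerSeries ℚ) :
    coeff n ((Polynomial.aeval D p) f) = p.eval (g n) * coeff n f := by
  induction p using Polynomial.induction_on' with
  | add p q hp hq =>
    simp [map_add, LinearMap.add_apply, hp, hq, add_mul]
  | monomial k a =>
    rw [Polynomial.aeval_monomial, Module.End.mul_apply,
      Algebra.algebraMap_eq_smul_one, LinearMap.smul_apply,
      Module.End.one_apply, map_smul, coeff_diag_pow D g h,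
      Polynomial.eval_monomial]
    simp [mul_assoc]

/-- If `Σ A_n x^n` is annihilated by `θ² − xP(θ) − cx²(θ+1)²` and `Σ B_n x^n`
is annihilated by `θ² − xQ(θ)`, with `deg P, deg Q ≤ 2`, then the Hadamard product
`Σ A_n B_n x^n` is annihilated by `θ⁴ − xP(θ)Q(θ) − cx²Q(θ)Q(θ+1)`. -/
theorem hadamard_annihilated (P Q : Polynomial ℚ) (hP : P.degree ≤ 2) (hQ : Q.degree ≤ 2)
    (c : ℚ) (A B : PowerSeries ℚ)
    (hA : ((Th ^ 2 - Mx * Polynomial.aeval Th P - c • (Mx ^ 2 * (Th + 1) ^ 2) :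
      Module.End ℚ (PowerSeries ℚ))) A = 0)
    (hB : (Th ^ 2 - Mx * Polynomial.aeval Th Q) B = 0) :
    ((Th ^ 4 - Mx * (Polynomial.aeval Th P * Polynomial.aeval Th Q)
        - c • (Mx ^ 2 * (Polynomial.aeval Th Q * Polynomial.aeval (Th + 1) Q)) :
      Module.End ℚ (PowerSeries ℚ)))
      (hadamard A B) = 0 := by
  set a : ℕ → ℚ := fun n => coeff n A with ha
  set b : ℕ → ℚ := fun n => coeff n B with hb
  -- recursion for A
  have eA : ∀ m : ℕ, ((m : ℚ) + 2) ^ 2 * a (m + 2)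
      = P.eval ((m : ℚ) + 1) * a (m + 1) + c * (((m : ℚ) + 1) ^ 2 * a m) := by
    intro m
    have h0 := congrArg (coeff (m + 2)) hA
    simp only [LinearMap.sub_apply, LinearMap.smul_apply, Module.End.mul_apply,
      map_sub, map_smul, smul_eq_mul, map_zero, pow_two, Module.End.mul_apply] at h0
    rw [show m + 2 = (m + 1) + 1 from rfl, coeff_Mx_succ, coeff_Mx_succ,
      coeff_Mx_succ] at h0
    rw [coeff_Th, coeff_Th, coeff_diag_aeval Th (fun n => (n : ℚ)) coeff_Th,
      coeff_Th_add_one, coeff_Th_add_one] at h0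
    simp only [ha]
    push_cast at h0 ⊢
    linear_combination h0
  have eA1 : a 1 = P.eval 0 * a 0 := by
    have h0 := congrArg (coeff 1) hA
    simp only [LinearMap.sub_apply, LinearMap.smul_apply, Module.End.mul_apply,
      map_sub, map_smul, smul_eq_mul, map_zero, pow_two, Module.End.mul_apply] at h0
    rw [show (1 : ℕ) = 0 + 1 from rfl] at h0
    rw [coeff_Mx_succ, coeff_Mx_succ, coeff_Mx_zero] at h0
    rw [coeff_Th, coeff_Th, coeff_diag_aeval Th (fun n => (n : ℚ)) coeff_Th] at h0
    simp only [ha]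
    push_cast at h0
    linear_combination h0
  -- recursion for B
  have eB : ∀ m : ℕ, ((m : ℚ) + 1) ^ 2 * b (m + 1) = Q.eval (m : ℚ) * b m := by
    intro m
    have h0 := congrArg (coeff (m + 1)) hB
    simp only [LinearMap.sub_apply, Module.End.mul_apply, map_sub, map_zero,
      pow_two] at h0
    rw [coeff_Mx_succ, coeff_Th, coeff_Th,
      coeff_diag_aeval Th (fun n => (n : ℚ)) coeff_Th] at h0
    simp only [ha, hb]
    push_cast at h0
    linear_combination h0
  -- now the goal, coefficientwise
  ext n
  simp only [LinearMap.sub_apply, LinearMap.smul_apply, Module.End.mul_apply,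
    map_sub, map_smul, smul_eq_mul, map_zero]
  have hcoeff : ∀ m : ℕ, coeff m (hadamard A B) = a m * b m := by
    intro m; simp [hadamard, ha, hb]
  have h4 : ∀ m : ℕ, coeff m ((Th ^ 4) (hadamard A B)) = (m : ℚ) ^ 4 * (a m * b m) := by
    intro m
    rw [coeff_diag_pow Th (fun n => (n : ℚ)) coeff_Th, hcoeff]
  match n with
  | 0 =>
    rw [h4, coeff_Mx_zero, coeff_Mx_sq_zero]
    simp
  | 1 =>
    rw [h4, show (1 : ℕ) = 0 + 1 from rfl, coeff_Mx_succ,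
      coeff_Mx_sq_one]
    rw [coeff_diag_aeval Th (fun n => (n : ℚ)) coeff_Th,
      coeff_diag_aeval Th (fun n => (n : ℚ)) coeff_Th, hcoeff]
    have e1 := eB 0
    push_cast at e1 ⊢
    rw [eA1]
    rw [show b 1 = Q.eval 0 * b 0 from by linarith [e1]]
    ring
  | (m + 2) =>
    rw [h4, show m + 2 = (m + 1) + 1 from rfl, coeff_Mx_succ,
      show (m + 1) + 1 = m + 2 from rfl, coeff_Mx_sq]
    rw [coeff_diag_aeval Th (fun n => (n : ℚ)) coeff_Th,
      coeff_diag_aeval Th (fun n => (n : ℚ)) coeff_Th,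
      coeff_diag_aeval Th (fun n => (n : ℚ)) coeff_Th,
      coeff_diag_aeval (Th + 1) (fun n => (n : ℚ) + 1) coeff_Th_add_one]
    simp only [hcoeff]
    have e1 := eA m
    have e2 := eB (m + 1)
    have e3 := eB m
    push_cast at e1 e2 e3 ⊢
    linear_combination (((m : ℚ) + 2) ^ 2 * b (m + 2)) * e1
      + (P.eval ((m : ℚ) + 1) * a (m + 1) + c * ((m : ℚ) + 1) ^ 2 * a m) * e2
      + (c * Q.eval ((m : ℚ) + 1) * a m) * e3
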